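/- Fix λ > 0 and α ∈ (−1,1), and define E : (0,∞) → ℝ by E(τ) = e^{−λτ}·(e^{3λτ} − α)/(τ·(e^{λτ} − 1)), the control gain ε of the delayed-states-difference ODFC scheme corresponding to multiplier α. Then E attains a global minimum on (0,∞) at a unique point τ*, and τ* satisfies τ* = (1/λ)·((e^{2λτ*} − α·e^{−λτ*})·(e^{λτ*} − 1))/(e^{3λτ*} − 2e^{2λτ*} − α·e^{−λτ*} + 2α). -/

import Mathlib

noncomputable def Nf (lam α τ : ℝ) : ℝ := Real.exp (2*lam*τ) - α * Real.exp (-(lam*τ))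

noncomputable def Gf (lam α τ : ℝ) : ℝ := Nf lam α τ / (τ * (Real.exp (lam*τ) - 1))

noncomputable def Lf (lam α τ : ℝ) : ℝ :=
  Real.log (Nf lam α τ) - Real.log τ - Real.log (Real.exp (lam*τ) - 1)

noncomputable def D1f (lam α τ : ℝ) : ℝ :=
  (2*lam*Real.exp (2*lam*τ) + α*lam*Real.exp (-(lam*τ))) / Nf lam α τ
    - 1/τ - lam * Real.exp (lam*τ) / (Real.exp (lam*τ) - 1)

noncomputable def D2f (lam α τ : ℝ) : ℝ :=
  lam^2 * Real.exp (lam*τ) * (-9*α/(Nf lam α τ)^2 + 1/(Real.exp (lam*τ)-1)^2) + 1/τ^2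

lemma hasDerivAt_expc (c τ : ℝ) :
    HasDerivAt (fun t => Real.exp (c*t)) (c * Real.exp (c*τ)) τ := by
  simpa [mul_comm] using ((hasDerivAt_id τ).const_mul c).exp

lemma hasDerivAt_expneg (lam τ : ℝ) :
    HasDerivAt (fun t => Real.exp (-(lam*t))) (-lam * Real.exp (-(lam*τ))) τ := by
  simpa [mul_comm] using (((hasDerivAt_id τ).const_mul lam).neg).exp

lemma hasDerivAt_Nf (lam α τ : ℝ) :
    HasDerivAt (Nf lam α) (2*lam*Real.exp (2*lam*τ) + α*lam*Real.exp (-(lam*τ))) τ := by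
  have h1 := hasDerivAt_expc (2*lam) τ
  have h2 := (hasDerivAt_expneg lam τ).const_mul α
  have h := h1.sub h2
  refine h.congr_deriv ?_
  ring

lemma exp2_eq (lam τ : ℝ) : Real.exp (2*lam*τ) = Real.exp (lam*τ)^2 := by
  rw [show (2:ℝ)*lam*τ = lam*τ + lam*τ by ring, Real.exp_add, sq]

lemma exp3_eq (lam τ : ℝ) : Real.exp (3*lam*τ) = Real.exp (lam*τ)^3 := by
  rw [show (3:ℝ)*lam*τ = lam*τ + (lam*τ + lam*τ) by ring, Real.exp_add, Real.exp_add]; ring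

lemma expneg_eq (lam τ : ℝ) : Real.exp (-(lam*τ)) = (Real.exp (lam*τ))⁻¹ := Real.exp_neg _

lemma u_gt_one {lam τ : ℝ} (hlam : 0 < lam) (hτ : 0 < τ) : 1 < Real.exp (lam*τ) :=
  Real.one_lt_exp_iff.2 (mul_pos hlam hτ)

lemma Nf_eq (lam α τ : ℝ) : Nf lam α τ = Real.exp (lam*τ)^2 - α / Real.exp (lam*τ) := by
  rw [Nf, exp2_eq, expneg_eq, div_eq_mul_inv]

lemma Nf_pos {lam α τ : ℝ} (hα1 : α < 1) (hlam : 0 < lam) (hτ : 0 < τ) :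
    0 < Nf lam α τ := by
  rw [Nf_eq]
  have hu := u_gt_one hlam hτ
  have hu0 : (0:ℝ) < Real.exp (lam*τ) := Real.exp_pos _
  have : α / Real.exp (lam*τ) < 1 := by
    rw [div_lt_one hu0]; linarith
  nlinarith

lemma Gf_pos {lam α τ : ℝ} (hα1 : α < 1) (hlam : 0 < lam) (hτ : 0 < τ) :
    0 < Gf lam α τ := by
  have hu := u_gt_one hlam hτ
  exact div_pos (Nf_pos hα1 hlam hτ) (by nlinarith)

lemma Gf_lb {lam α τ : ℝ} (hα1 : α < 1) (hlam : 0 < lam) (hτ : 0 < τ) :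
    (Real.exp (lam*τ) + 1)/τ ≤ Gf lam α τ := by
  have hu := u_gt_one hlam hτ
  have hu0 : (0:ℝ) < Real.exp (lam*τ) := Real.exp_pos _
  have hαu : α / Real.exp (lam*τ) < 1 := by rw [div_lt_one hu0]; linarith
  rw [Gf, Nf_eq, div_le_div_iff₀ hτ (by nlinarith)]
  nlinarith

lemma Lf_eq_log_Gf {lam α τ : ℝ} (hα1 : α < 1) (hlam : 0 < lam) (hτ : 0 < τ) :
    Lf lam α τ = Real.log (Gf lam α τ) := by
  have hu := u_gt_one hlam hτ
  have hN := Nf_pos hα1 hlam hτ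
  have hune : Real.exp (lam*τ) - 1 ≠ 0 := by linarith
  rw [Gf, Real.log_div hN.ne' (mul_ne_zero hτ.ne' hune),
    Real.log_mul hτ.ne' hune, Lf]
  ring

lemma hasDerivAt_Lf {lam α τ : ℝ} (hα1 : α < 1) (hlam : 0 < lam) (hτ : 0 < τ) :
    HasDerivAt (Lf lam α) (D1f lam α τ) τ := by
  have hNne : Nf lam α τ ≠ 0 := (Nf_pos hα1 hlam hτ).ne'
  have hu := u_gt_one hlam hτ
  have hune : Real.exp (lam*τ) - 1 ≠ 0 := by linarith
  have h1 := (hasDerivAt_Nf lam α τ).log hNne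
  have h2 := Real.hasDerivAt_log hτ.ne'
  have h3 := ((hasDerivAt_expc lam τ).sub_const 1).log hune
  have h := (h1.sub h2).sub h3
  refine h.congr_deriv ?_
  simp [D1f, one_div]

lemma hasDerivAt_D1f {lam α τ : ℝ} (hα1 : α < 1) (hlam : 0 < lam) (hτ : 0 < τ) :
    HasDerivAt (D1f lam α) (D2f lam α τ) τ := by
  have hNpos := Nf_pos hα1 hlam hτ
  have hNne : Nf lam α τ ≠ 0 := hNpos.ne'
  have hu := u_gt_one hlam hτ
  have hu0 : (0:ℝ) < Real.exp (lam*τ) := Real.exp_pos _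
  have hune : Real.exp (lam*τ) - 1 ≠ 0 := by linarith
  have hA : HasDerivAt (fun t => 2*lam*Real.exp (2*lam*t) + α*lam*Real.exp (-(lam*t)))
      (2*lam*(2*lam*Real.exp (2*lam*τ)) + α*lam*(-lam * Real.exp (-(lam*τ)))) τ := by
    have h1 := (hasDerivAt_expc (2*lam) τ).const_mul (2*lam)
    have h2 := (hasDerivAt_expneg lam τ).const_mul (α*lam)
    exact h1.add h2
  have hterm1 := hA.div (hasDerivAt_Nf lam α τ) hNne
  have hterm2 : HasDerivAt (fun t : ℝ => 1/t) (-(1/τ^2)) τ := by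
    simpa [one_div] using hasDerivAt_inv hτ.ne'
  have hB : HasDerivAt (fun t => lam * Real.exp (lam*t)) (lam * (lam * Real.exp (lam*τ))) τ :=
    (hasDerivAt_expc lam τ).const_mul lam
  have hC : HasDerivAt (fun t => Real.exp (lam*t) - 1) (lam * Real.exp (lam*τ)) τ :=
    (hasDerivAt_expc lam τ).sub_const 1
  have hterm3 := hB.div hC hune
  have h := (hterm1.sub hterm2).sub hterm3
  have heq : D1f lam α = fun t => (2*lam*Real.exp (2*lam*t) + α*lam*Real.exp (-(lam*t))) / Nf lam α t
    - 1/t - lam * Real.exp (lam*t) / (Real.exp (lam*t) - 1) := rfl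
  rw [heq]
  refine h.congr_deriv ?_
  have hN2 : Real.exp (lam*τ)^2 - α / Real.exp (lam*τ) ≠ 0 := by
    rw [← Nf_eq]; exact hNne
  rw [D2f]
  simp only [Nf_eq, exp2_eq, expneg_eq]
  have hu0' : Real.exp (lam*τ) ≠ 0 := hu0.ne'
  have hrw : Real.exp (lam*τ)^2 - α / Real.exp (lam*τ)
      = (Real.exp (lam*τ)^3 - α)/Real.exp (lam*τ) := by field_simp
  have hvne : Real.exp (lam*τ)^3 - α ≠ 0 := by
    intro hz
    apply hN2
    rw [hrw, hz, zero_div]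
  rw [hrw]
  rw [div_pow]
  set u := Real.exp (lam*τ) with hudef
  field_simp
  ring

lemma key_ineq {α u : ℝ} (hα1 : α < 1) (hu : 1 < u) :
    9*α*(u-1)^2 ≤ (u^2 - α/u)^2 := by
  have hu0 : (0:ℝ) < u := by linarith
  have h1 : u^2 - α/u = (u^3 - α)/u := by field_simp
  rw [h1, div_pow]
  rw [le_div_iff₀ (by positivity)]
  rcases le_or_gt α 0 with h | h
  · have h9 : 9*α*(u-1)^2*u^2 ≤ 0 :=
      mul_nonpos_of_nonpos_of_nonneg (by nlinarith [sq_nonneg (u-1)]) (sq_nonneg u)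
    nlinarith [sq_nonneg (u^3 - α)]
  · set β := Real.sqrt α with hβdef
    have hβ2 : β^2 = α := Real.sq_sqrt h.le
    have hβ0 : 0 < β := Real.sqrt_pos.2 h
    have hβ1 : β < 1 := by nlinarith [Real.sqrt_nonneg α]
    have hfac : (0:ℝ) ≤ u^2 + u + 1 - 3*β*u := by nlinarith [sq_nonneg (u-1)]
    have hA : 0 < u^3 - α - 3*β*u*(u-1) := by
      have : u^3 - α - 3*β*u*(u-1) = (u-1)*(u^2+u+1-3*β*u) + (1-β^2) := by
        ring_nf; nlinarith [hβ2]
      nlinarith [mul_nonneg (by linarith : (0:ℝ) ≤ u - 1) hfac]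
    have hB : 0 < u^3 - α + 3*β*u*(u-1) := by
      nlinarith [mul_pos (mul_pos hβ0 hu0) (by linarith : (0:ℝ) < u - 1)]
    nlinarith [mul_pos hA hB]

lemma D2f_pos {lam α τ : ℝ} (hα1 : α < 1) (hlam : 0 < lam) (hτ : 0 < τ) :
    0 < D2f lam α τ := by
  have hu := u_gt_one hlam hτ
  have hu0 : (0:ℝ) < Real.exp (lam*τ) := Real.exp_pos _
  have hNpos := Nf_pos hα1 hlam hτ
  have hkey := key_ineq hα1 hu
  rw [D2f]
  have h1 : (0:ℝ) ≤ -9*α/(Nf lam α τ)^2 + 1/(Real.exp (lam*τ)-1)^2 := by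
    rw [Nf_eq]
    rw [Nf_eq] at hNpos
    have hd1 : (0:ℝ) < (Real.exp (lam*τ)^2 - α/Real.exp (lam*τ))^2 := by positivity
    have hd2 : (0:ℝ) < (Real.exp (lam*τ)-1)^2 := by nlinarith
    rw [div_add_div _ _ (ne_of_gt hd1) (ne_of_gt hd2), le_div_iff₀ (by positivity)]
    nlinarith
  have h2 : (0:ℝ) < 1/τ^2 := by positivity
  nlinarith [mul_nonneg (by positivity : (0:ℝ) ≤ lam^2 * Real.exp (lam*τ)) h1]

lemma Lf_strictConvexOn {lam α : ℝ} (hα1 : α < 1) (hlam : 0 < lam) :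
    StrictConvexOn ℝ (Set.Ioi (0:ℝ)) (Lf lam α) := by
  apply strictConvexOn_of_deriv2_pos (convex_Ioi 0)
  · intro τ hτ
    exact (hasDerivAt_Lf hα1 hlam hτ).continuousAt.continuousWithinAt
  · intro τ hτ
    rw [interior_Ioi] at hτ
    have hd1 : ∀ σ ∈ Set.Ioi (0:ℝ), deriv (Lf lam α) σ = D1f lam α σ := fun σ hσ =>
      (hasDerivAt_Lf hα1 hlam hσ).deriv
    have hd1' : deriv (Lf lam α) =ᶠ[nhds τ] D1f lam α :=
      Filter.eventuallyEq_of_mem (Ioi_mem_nhds hτ) hd1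
    have hD : deriv (deriv (Lf lam α)) τ = deriv (D1f lam α) τ := hd1'.deriv_eq
    have h2 : deriv (D1f lam α) τ = D2f lam α τ := (hasDerivAt_D1f hα1 hlam hτ).deriv
    show 0 < deriv^[2] (Lf lam α) τ
    rw [Function.iterate_succ, Function.iterate_one, Function.comp_apply, hD, h2]
    exact D2f_pos hα1 hlam hτ

lemma stationary_eq {lam α τ : ℝ} (hα1 : α < 1) (hlam : 0 < lam) (hτ : 0 < τ)
    (hzero : D1f lam α τ = 0) :
    lam*τ*(Real.exp (lam*τ)^3 - 2*Real.exp (lam*τ)^2 - α/Real.exp (lam*τ) + 2*α)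
      = (Real.exp (lam*τ)^2 - α/Real.exp (lam*τ))*(Real.exp (lam*τ) - 1) := by
  have hu := u_gt_one hlam hτ
  have hu0 : (0:ℝ) < Real.exp (lam*τ) := Real.exp_pos _
  have hN : Real.exp (lam*τ)^2 - α/Real.exp (lam*τ) ≠ 0 := by
    rw [← Nf_eq]; exact (Nf_pos hα1 hlam hτ).ne'
  rw [D1f, Nf_eq, exp2_eq, expneg_eq] at hzero
  set u := Real.exp (lam*τ) with hudef
  have hune : u - 1 ≠ 0 := by linarith
  have hv : u^3 - α ≠ 0 := by
    intro hz; apply hN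
    have : u^2 - α/u = (u^3-α)/u := by field_simp
    rw [this, hz, zero_div]
  have hrw : u^2 - α/u = (u^3-α)/u := by field_simp
  have hzero' := hzero
  rw [show α*lam*u⁻¹ = α*lam/u from (div_eq_mul_inv (α*lam) u).symm, hrw] at hzero'
  rw [hrw]
  field_simp [hv] at hzero'
  field_simp
  linear_combination hzero'

lemma exp_quarter_sq {x : ℝ} (hx : 0 ≤ x) : x^2/4 ≤ Real.exp x := by
  have h := Real.add_one_le_exp (x/2)
  have h2 : Real.exp (x/2)^2 = Real.exp x := by
    rw [sq, ← Real.exp_add]; ring_nf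
  nlinarith [Real.exp_pos (x/2)]

theorem odfc_states_difference_optimal_delay
    (lam α : ℝ) (hlam : 0 < lam) (hα : α ∈ Set.Ioo (-1 : ℝ) 1)
    (E : ℝ → ℝ)
    (hE : ∀ τ > (0 : ℝ),
      E τ = Real.exp (-(lam * τ)) * (Real.exp (3 * lam * τ) - α) /
        (τ * (Real.exp (lam * τ) - 1))) :
    ∃ τs > (0 : ℝ),
      (∀ σ > (0 : ℝ), E τs ≤ E σ) ∧
      (∀ σ > (0 : ℝ), (∀ σ' > (0 : ℝ), E σ ≤ E σ') → σ = τs) ∧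
      τs = (1 / lam) *
        ((Real.exp (2 * lam * τs) - α * Real.exp (-(lam * τs))) *
            (Real.exp (lam * τs) - 1)) /
          (Real.exp (3 * lam * τs) - 2 * Real.exp (2 * lam * τs) -
            α * Real.exp (-(lam * τs)) + 2 * α) := by
  obtain ⟨hα0, hα1⟩ := hα
  have hEG : ∀ τ : ℝ, 0 < τ → E τ = Gf lam α τ := by
    intro τ hτ
    rw [hE τ hτ]
    have hnum : Real.exp (-(lam*τ)) * (Real.exp (3*lam*τ) - α) = Nf lam α τ := by
      rw [mul_sub, ← Real.exp_add, show -(lam*τ) + 3*lam*τ = 2*lam*τ by ring, Nf]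
      ring
    rw [Gf, ← hnum]
  -- existence of a minimum
  set M := Gf lam α 1 with hMdef
  have hM0 : 0 < M := Gf_pos hα1 hlam one_pos
  set a := min 1 (1/M) with hadef
  set b := max 1 (4*M/lam^2) with hbdef
  have ha0 : 0 < a := lt_min one_pos (by positivity)
  have hax : a ≤ 1 := min_le_left _ _
  have hbx : 1 ≤ b := le_max_left _ _
  have hcont : ContinuousOn (Gf lam α) (Set.Icc a b) := by
    intro τ hτ
    have hτ0 : 0 < τ := lt_of_lt_of_le ha0 hτ.1
    have hu := u_gt_one hlam hτ0
    apply ContinuousAt.continuousWithinAt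
    apply ContinuousAt.div
    · unfold Nf; fun_prop
    · fun_prop
    · exact (by nlinarith : (0:ℝ) < τ * (Real.exp (lam*τ) - 1)).ne'
  obtain ⟨τs, hτsmem, hmin⟩ := (isCompact_Icc : IsCompact (Set.Icc a b)).exists_isMinOn
    ⟨1, Set.mem_Icc.2 ⟨hax, hbx⟩⟩ hcont
  have hτs0 : 0 < τs := lt_of_lt_of_le ha0 hτsmem.1
  have hτsM : Gf lam α τs ≤ M := isMinOn_iff.1 hmin 1 (Set.mem_Icc.2 ⟨hax, hbx⟩)
  have hglobalG : ∀ σ : ℝ, 0 < σ → Gf lam α τs ≤ Gf lam α σ := by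
    intro σ hσ
    rcases lt_or_ge σ a with h | h
    · have hlb := Gf_lb hα1 hlam hσ
      have hu := u_gt_one hlam hσ
      have ha1 : a ≤ 1/M := min_le_right _ _
      have hMσ : M * σ < 1 := by
        calc M * σ < M * a := by exact mul_lt_mul_of_pos_left h hM0
        _ ≤ M * (1/M) := mul_le_mul_of_nonneg_left ha1 hM0.le
        _ = 1 := by field_simp
      have h2σ : M < 2/σ := by
        rw [lt_div_iff₀ hσ]; nlinarith
      have h25 : (2:ℝ)/σ < (Real.exp (lam*σ) + 1)/σ := by
        rw [div_lt_div_iff₀ hσ hσ]; nlinarith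
      linarith
    · rcases le_or_gt σ b with h2 | h2
      · exact isMinOn_iff.1 hmin σ (Set.mem_Icc.2 ⟨h, h2⟩)
      · have hlb := Gf_lb hα1 hlam hσ
        have hu := u_gt_one hlam hσ
        have hb4 : 4*M/lam^2 ≤ b := le_max_right _ _
        have hexp : (lam*σ)^2/4 ≤ Real.exp (lam*σ) := exp_quarter_sq (by positivity)
        have h3 : lam^2*σ/4 ≤ Real.exp (lam*σ)/σ := by
          rw [div_le_div_iff₀ (by norm_num) hσ] at *
          nlinarith
        have h4 : M < lam^2*σ/4 := by
          have : 4*M/lam^2 < σ := lt_of_le_of_lt hb4 h2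
          rw [div_lt_iff₀ (by positivity)] at this
          nlinarith
        have h5 : Real.exp (lam*σ)/σ < (Real.exp (lam*σ)+1)/σ := by
          rw [div_lt_div_iff₀ hσ hσ]; nlinarith
        linarith
  refine ⟨τs, hτs0, ?_, ?_, ?_⟩
  · intro σ hσ
    rw [hEG τs hτs0, hEG σ hσ]
    exact hglobalG σ hσ
  · intro σ hσ hσmin
    have hminLτs : IsMinOn (Lf lam α) (Set.Ioi 0) τs := by
      apply isMinOn_iff.2
      intro y hy
      rw [Lf_eq_log_Gf hα1 hlam hτs0, Lf_eq_log_Gf hα1 hlam hy]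
      exact Real.log_le_log (Gf_pos hα1 hlam hτs0) (hglobalG y hy)
    have hminLσ : IsMinOn (Lf lam α) (Set.Ioi 0) σ := by
      apply isMinOn_iff.2
      intro y hy
      rw [Lf_eq_log_Gf hα1 hlam hσ, Lf_eq_log_Gf hα1 hlam hy]
      have := hσmin y hy
      rw [hEG σ hσ, hEG y hy] at this
      exact Real.log_le_log (Gf_pos hα1 hlam hσ) this
    exact (Lf_strictConvexOn hα1 hlam).eq_of_isMinOn hminLσ hminLτs hσ hτs0
  · have hloc : IsLocalMin (Lf lam α) τs := by
      apply Filter.eventually_of_mem (Ioi_mem_nhds hτs0)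
      intro y hy
      rw [Lf_eq_log_Gf hα1 hlam hτs0, Lf_eq_log_Gf hα1 hlam hy]
      exact Real.log_le_log (Gf_pos hα1 hlam hτs0) (hglobalG y hy)
    have hzero : D1f lam α τs = 0 :=
      hloc.hasDerivAt_eq_zero (hasDerivAt_Lf hα1 hlam hτs0)
    have heq := stationary_eq hα1 hlam hτs0 hzero
    have hu := u_gt_one hlam hτs0
    have hu0 : (0:ℝ) < Real.exp (lam*τs) := Real.exp_pos _
    have hNpos : (0:ℝ) < Real.exp (lam*τs)^2 - α/Real.exp (lam*τs) := by
      rw [← Nf_eq]; exact Nf_pos hα1 hlam hτs0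
    have hBpos : 0 < Real.exp (lam*τs)^3 - 2*Real.exp (lam*τs)^2 - α/Real.exp (lam*τs) + 2*α := by
      have hR : (0:ℝ) < (Real.exp (lam*τs)^2 - α/Real.exp (lam*τs))*(Real.exp (lam*τs) - 1) := by
        apply mul_pos hNpos; linarith
      nlinarith [heq, mul_pos hlam hτs0]
    rw [exp2_eq, exp3_eq, expneg_eq]
    have hBne : Real.exp (lam*τs)^3 - 2*Real.exp (lam*τs)^2 - α*(Real.exp (lam*τs))⁻¹ + 2*α ≠ 0 := by
      have : α*(Real.exp (lam*τs))⁻¹ = α/Real.exp (lam*τs) := by rw [div_eq_mul_inv]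
      rw [this]; exact hBpos.ne'
    have hlamne : lam ≠ 0 := hlam.ne'
    rw [show α*(Real.exp (lam*τs))⁻¹ = α/Real.exp (lam*τs) from (div_eq_mul_inv α _).symm]
    rw [eq_div_iff hBpos.ne', one_div, inv_mul_eq_div, eq_div_iff hlamne]
    linear_combination heq
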